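/- arXiv:2208.05815 — 2 statements merged into one kernel-verified Lean document; each statement's English description precedes it below -/
import Mathlib

section
/- Let K be a valued field and V a finite-dimensional valued K-vector space of dimension n. Then the number of orbits of the Γ-action on Γ(V) is at most n. -/
section ValuedVSAux

variable {K : Type*} [Field K] {V : Type*} [AddCommGroup V] [Module K V]
  {Γ : Type*} [AddCommGroup Γ] [LinearOrder Γ] [IsOrderedAddMonoid Γ]
  {ΓV : Type*} [LinearOrder ΓV] [AddAction Γ ΓV]
  {valK : K → Γ} {val : V → ΓV}

private lemma vvs_valK_one
    (hvalK : ∀ a b : K, a ≠ 0 → b ≠ 0 → valK (a * b) = valK a + valK b) :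
    valK 1 = 0 := by
  have h := hvalK 1 1 one_ne_zero one_ne_zero
  rw [mul_one] at h
  exact (left_eq_add.mp h)

private lemma vvs_valK_negOne
    (hvalK : ∀ a b : K, a ≠ 0 → b ≠ 0 → valK (a * b) = valK a + valK b) :
    valK (-1) = 0 := by
  have h := hvalK (-1) (-1) (by norm_num) (by norm_num)
  rw [neg_mul_neg, one_mul, vvs_valK_one hvalK] at h
  rcases lt_trichotomy (valK (-1)) 0 with hl | he | hg
  · exact absurd h.symm (ne_of_lt (add_neg hl hl))
  · exact he
  · exact absurd h.symm (ne_of_gt (add_pos hg hg))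

private lemma vvs_val_neg
    (hvalK : ∀ a b : K, a ≠ 0 → b ≠ 0 → valK (a * b) = valK a + valK b)
    (hscalar : ∀ (a : K) (v : V), a ≠ 0 → v ≠ 0 → val (a • v) = valK a +ᵥ val v)
    {w : V} (hw : w ≠ 0) : val (-w) = val w := by
  have h : -w = (-1 : K) • w := by rw [neg_one_smul]
  rw [h, hscalar (-1) w (by norm_num) hw, vvs_valK_negOne hvalK, zero_vadd]

private lemma vvs_pair_lt
    (hvalK : ∀ a b : K, a ≠ 0 → b ≠ 0 → valK (a * b) = valK a + valK b)
    (hscalar : ∀ (a : K) (v : V), a ≠ 0 → v ≠ 0 → val (a • v) = valK a +ᵥ val v)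
    (hult : ∀ v w : V, v ≠ 0 → w ≠ 0 → v + w ≠ 0 → min (val v) (val w) ≤ val (v + w))
    {u w : V} (hu : u ≠ 0) (hw : w ≠ 0) (hlt : val u < val w) :
    u + w ≠ 0 ∧ val (u + w) = val u := by
  have hne0 : u + w ≠ 0 := by
    intro h
    have : u = -w := eq_neg_of_add_eq_zero_left h
    rw [this, vvs_val_neg hvalK hscalar hw] at hlt
    exact lt_irrefl _ hlt
  refine ⟨hne0, ?_⟩
  have hle : val u ≤ val (u + w) := by
    have := hult u w hu hw hne0
    rwa [min_eq_left (le_of_lt hlt)] at this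
  refine le_antisymm ?_ hle
  by_contra hcon
  push_neg at hcon
  have heq : (u + w) + (-w) = u := by abel
  have h2 := hult (u + w) (-w) hne0 (neg_ne_zero.mpr hw) (by rw [heq]; exact hu)
  rw [heq, vvs_val_neg hvalK hscalar hw] at h2
  have : val u < min (val (u + w)) (val w) := lt_min hcon hlt
  exact absurd h2 (not_le_of_gt this)

private lemma vvs_pair
    (hvalK : ∀ a b : K, a ≠ 0 → b ≠ 0 → valK (a * b) = valK a + valK b)
    (hscalar : ∀ (a : K) (v : V), a ≠ 0 → v ≠ 0 → val (a • v) = valK a +ᵥ val v)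
    (hult : ∀ v w : V, v ≠ 0 → w ≠ 0 → v + w ≠ 0 → min (val v) (val w) ≤ val (v + w))
    {u w : V} (hu : u ≠ 0) (hw : w ≠ 0) (hne : val u ≠ val w) :
    u + w ≠ 0 ∧ (val (u + w) = val u ∨ val (u + w) = val w) := by
  rcases lt_or_gt_of_ne hne with hlt | hgt
  · obtain ⟨h1, h2⟩ := vvs_pair_lt hvalK hscalar hult hu hw hlt
    exact ⟨h1, Or.inl h2⟩
  · obtain ⟨h1, h2⟩ := vvs_pair_lt hvalK hscalar hult hw hu hgt
    rw [add_comm w u] at h1 h2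
    exact ⟨h1, Or.inr h2⟩

private lemma vvs_sum
    (hvalK : ∀ a b : K, a ≠ 0 → b ≠ 0 → valK (a * b) = valK a + valK b)
    (hscalar : ∀ (a : K) (v : V), a ≠ 0 → v ≠ 0 → val (a • v) = valK a +ᵥ val v)
    (hult : ∀ v w : V, v ≠ 0 → w ≠ 0 → v + w ≠ 0 → min (val v) (val w) ≤ val (v + w))
    {ι : Type*} (w : ι → V) (s : Finset ι) :
    s.Nonempty → (∀ i ∈ s, w i ≠ 0) →
    (∀ i ∈ s, ∀ j ∈ s, i ≠ j → val (w i) ≠ val (w j)) →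
    (∑ i ∈ s, w i) ≠ 0 ∧ ∃ j ∈ s, val (∑ i ∈ s, w i) = val (w j) := by
  induction s using Finset.cons_induction with
  | empty => intro h; exact absurd h (by simp)
  | cons a t ha ih =>
    intro _ hnz hdist
    rcases t.eq_empty_or_nonempty with rfl | htne
    · simp only [Finset.sum_cons, Finset.sum_empty, add_zero]
      exact ⟨hnz a (Finset.mem_cons_self a _), a, Finset.mem_cons_self a _, rfl⟩
    · have hnz' : ∀ i ∈ t, w i ≠ 0 := fun i hi => hnz i (Finset.mem_cons_of_mem hi)
      have hdist' : ∀ i ∈ t, ∀ j ∈ t, i ≠ j → val (w i) ≠ val (w j) :=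
        fun i hi j hj => hdist i (Finset.mem_cons_of_mem hi) j (Finset.mem_cons_of_mem hj)
      obtain ⟨htsum, j, hjt, hjval⟩ := ih htne hnz' hdist'
      have haj : a ≠ j := fun h => ha (h ▸ hjt)
      have hvne : val (w a) ≠ val (∑ i ∈ t, w i) := by
        rw [hjval]
        exact hdist a (Finset.mem_cons_self a _) j (Finset.mem_cons_of_mem hjt) haj
      obtain ⟨h1, h2⟩ := vvs_pair hvalK hscalar hult (hnz a (Finset.mem_cons_self a _)) htsum hvne
      rw [Finset.sum_cons]
      refine ⟨h1, ?_⟩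
      rcases h2 with h2 | h2
      · exact ⟨a, Finset.mem_cons_self a _, h2⟩
      · exact ⟨j, Finset.mem_cons_of_mem hjt, h2.trans hjval⟩

private lemma vvs_indep
    (hvalK : ∀ a b : K, a ≠ 0 → b ≠ 0 → valK (a * b) = valK a + valK b)
    (hscalar : ∀ (a : K) (v : V), a ≠ 0 → v ≠ 0 → val (a • v) = valK a +ᵥ val v)
    (hult : ∀ v w : V, v ≠ 0 → w ≠ 0 → v + w ≠ 0 → min (val v) (val w) ≤ val (v + w))
    {m : ℕ} (v : Fin m → V) (hv : ∀ i, v i ≠ 0)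
    (hdist : ∀ i j, i ≠ j → ∀ γ : Γ, γ +ᵥ val (v i) ≠ val (v j)) :
    LinearIndependent K v := by
  classical
  rw [Fintype.linearIndependent_iff]
  intro a ha
  by_contra hcon
  push_neg at hcon
  obtain ⟨i₀, hi₀⟩ := hcon
  set s : Finset (Fin m) := Finset.univ.filter (fun i => a i ≠ 0) with hs
  have hsne : s.Nonempty := ⟨i₀, by simp [hs, hi₀]⟩
  have hmem : ∀ i, i ∈ s ↔ a i ≠ 0 := by intro i; simp [hs]
  have hsum : ∑ i ∈ s, a i • v i = 0 := by
    rw [← ha]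
    refine Finset.sum_subset (Finset.filter_subset _ _) ?_
    intro j _ hj
    rw [hmem] at hj
    push_neg at hj
    rw [hj, zero_smul]
  have hnz : ∀ i ∈ s, a i • v i ≠ 0 := fun i hi =>
    smul_ne_zero ((hmem i).mp hi) (hv i)
  have hd : ∀ i ∈ s, ∀ j ∈ s, i ≠ j → val (a i • v i) ≠ val (a j • v j) := by
    intro i hi j hj hij heq
    rw [hscalar (a i) (v i) ((hmem i).mp hi) (hv i),
        hscalar (a j) (v j) ((hmem j).mp hj) (hv j)] at heq
    apply hdist i j hij (-(valK (a j)) + valK (a i))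
    rw [← vadd_vadd, heq, vadd_vadd, neg_add_cancel, zero_vadd]
  obtain ⟨hne, _⟩ := vvs_sum hvalK hscalar hult (fun i => a i • v i) s hsne hnz hd
  exact hne hsum

end ValuedVSAux

/-- In an `n`-dimensional valued vector space over a valued field, the number of
orbits of the value-group action on `Γ(V)` is at most `n`. -/
theorem valued_vector_space_orbits_le_dim
    (K : Type*) [Field K] (V : Type*) [AddCommGroup V] [Module K V]
    (Γ : Type*) [AddCommGroup Γ] [LinearOrder Γ] [IsOrderedAddMonoid Γ]
    (ΓV : Type*) [LinearOrder ΓV] [AddAction Γ ΓV]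
    (valK : K → Γ) (val : V → ΓV)
    (hmono1 : ∀ γ : Γ, StrictMono fun x : ΓV => γ +ᵥ x)
    (hmono2 : ∀ x : ΓV, StrictMono fun γ : Γ => γ +ᵥ x)
    (hvalK : ∀ a b : K, a ≠ 0 → b ≠ 0 → valK (a * b) = valK a + valK b)
    (hsurj : ∀ g : ΓV, ∃ v : V, v ≠ 0 ∧ val v = g)
    (hscalar : ∀ (a : K) (v : V), a ≠ 0 → v ≠ 0 → val (a • v) = valK a +ᵥ val v)
    (hult : ∀ v w : V, v ≠ 0 → w ≠ 0 → v + w ≠ 0 → min (val v) (val w) ≤ val (v + w))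
    (n : ℕ) [FiniteDimensional K V] (hdim : Module.finrank K V = n) :
    ∃ S : Finset (Set ΓV),
      (∀ x : ΓV, ({y : ΓV | ∃ γ : Γ, γ +ᵥ x = y} : Set ΓV) ∈ S) ∧ S.card ≤ n := by
  -- key cardinality bound from linear independence
  have key : ∀ (m : ℕ) (g : Fin m → ΓV),
      (∀ i j, i ≠ j → ∀ γ : Γ, γ +ᵥ g i ≠ g j) → m ≤ n := by
    classical
    intro m g hg
    choose v hv0 hvval using fun i => hsurj (g i)
    have hdist : ∀ i j, i ≠ j → ∀ γ : Γ, γ +ᵥ val (v i) ≠ val (v j) := by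
      intro i j hij γ
      rw [hvval i, hvval j]
      exact hg i j hij γ
    have hli := vvs_indep hvalK hscalar hult v hv0 hdist
    have := hli.fintype_card_le_finrank
    rwa [Fintype.card_fin, hdim] at this
  set Q := Quotient (AddAction.orbitRel Γ ΓV) with hQ
  have noemb : ∀ f : Fin (n + 1) ↪ Q, False := by
    intro f
    have := key (n + 1) (fun i => (f i).out) ?_
    · omega
    · intro i j hij γ hγ
      apply hij
      apply f.injective
      have hrel : (f j).out ∈ AddAction.orbit Γ ((f i).out) := ⟨γ, hγ⟩
      have : (⟦(f i).out⟧ : Q) = ⟦(f j).out⟧ := (Quotient.sound hrel).symm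
      rw [Quotient.out_eq, Quotient.out_eq] at this
      exact this
  have hfin : Finite Q := by
    by_contra h
    have : Infinite Q := not_finite_iff_infinite.mp h
    exact noemb (Fin.valEmbedding.trans (Infinite.natEmbedding Q))
  have : Fintype Q := Fintype.ofFinite Q
  have hcard : Fintype.card Q ≤ n := by
    by_contra h
    push_neg at h
    obtain ⟨f⟩ := Function.Embedding.nonempty_of_card_le
      (by rw [Fintype.card_fin]; omega : Fintype.card (Fin (n + 1)) ≤ Fintype.card Q)
    exact noemb f
  have horbit : ∀ x y : ΓV, (AddAction.orbitRel Γ ΓV).r x y →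
      AddAction.orbit Γ x = AddAction.orbit Γ y := fun x y h =>
    AddAction.orbit_eq_iff.mpr h
  classical
  refine ⟨Finset.univ.image (Quotient.lift (AddAction.orbit Γ) horbit), ?_, ?_⟩
  · intro x
    have hx : ({y : ΓV | ∃ γ : Γ, γ +ᵥ x = y} : Set ΓV) = AddAction.orbit Γ x := by
      ext y; simp [AddAction.orbit, Set.mem_setOf_eq, eq_comm]
    rw [hx]
    exact Finset.mem_image.mpr ⟨(⟦x⟧ : Q), Finset.mem_univ _, rfl⟩
  · calc (Finset.univ.image (Quotient.lift (AddAction.orbit Γ) horbit)).card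
        ≤ (Finset.univ : Finset Q).card := Finset.card_image_le
      _ = Fintype.card Q := Finset.card_univ
      _ ≤ n := hcard
end

section
/- Let V be an n-dimensional valued K-vector space with a splitting basis v₁, …, vₙ, i.e. a basis with Γ + val(v₁) > Γ + val(v₂) > ⋯ > Γ + val(vₙ) (the cosets/orbits of Γ in Γ(V) are strictly decreasing). For 0 ≤ i ≤ n define Vᵢ = {0} ∪ {x ∈ V : val(x) ∈ C₁ ∪ ⋯ ∪ Cᵢ}, where C₁ > C₂ > ⋯ > Cₙ are the orbits of Γ in Γ(V) ordered decreasingly. Then each Vᵢ is a K-linear subspace of V equal to the K-span of {v₁, …, vᵢ}, and 0 = V₀ ⊂ V₁ ⊂ ⋯ ⊂ Vₙ = V is a complete filtration. -/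
/-- For a split `n`-dimensional valued vector space with splitting basis
`v₁, …, vₙ` (orbits of the valuations strictly decreasing), the sets
`Vᵢ = {0} ∪ {x : val x ∈ C₁ ∪ ⋯ ∪ Cᵢ}` equal the spans of `{v₁,…,vᵢ}`, and
they form a complete (strictly increasing) filtration from `0` to `V`. -/
theorem valued_vector_space_splitting_basis_filtration
    (K : Type*) [Field K] (V : Type*) [AddCommGroup V] [Module K V]
    (Γ : Type*) [AddCommGroup Γ] [LinearOrder Γ] [IsOrderedAddMonoid Γ]
    (ΓV : Type*) [LinearOrder ΓV] [AddAction Γ ΓV]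
    (valK : K → Γ) (val : V → ΓV)
    (hmono1 : ∀ γ : Γ, StrictMono fun x : ΓV => γ +ᵥ x)
    (hmono2 : ∀ x : ΓV, StrictMono fun γ : Γ => γ +ᵥ x)
    (hvalK : ∀ a b : K, a ≠ 0 → b ≠ 0 → valK (a * b) = valK a + valK b)
    (hsurj : ∀ g : ΓV, ∃ v : V, v ≠ 0 ∧ val v = g)
    (hscalar : ∀ (a : K) (v : V), a ≠ 0 → v ≠ 0 → val (a • v) = valK a +ᵥ val v)
    (hult : ∀ v w : V, v ≠ 0 → w ≠ 0 → v + w ≠ 0 → min (val v) (val w) ≤ val (v + w))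
    (n : ℕ) (v : Fin n → V)
    (hli : LinearIndependent K v)
    (hspan : Submodule.span K (Set.range v) = ⊤)
    -- splitting basis: the orbit of `val (v i)` lies strictly above that of
    -- `val (v j)` whenever `i < j`
    (hsplit : ∀ i j : Fin n, i < j → ∀ y z : ΓV,
      (∃ γ : Γ, γ +ᵥ val (v i) = y) → (∃ γ : Γ, γ +ᵥ val (v j) = z) → z < y) :
    (∀ i : ℕ, i ≤ n →
      ({0} ∪ {x : V | x ≠ 0 ∧ ∃ j : Fin n, (j : ℕ) < i ∧
          ∃ γ : Γ, γ +ᵥ val (v j) = val x} : Set V)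
        = ↑(Submodule.span K (v '' {j : Fin n | (j : ℕ) < i})))
    ∧ (∀ i k : ℕ, i < k → k ≤ n →
        Submodule.span K (v '' {j : Fin n | (j : ℕ) < i})
          < Submodule.span K (v '' {j : Fin n | (j : ℕ) < k}))
    ∧ Submodule.span K (v '' {j : Fin n | (j : ℕ) < 0}) = ⊥
    ∧ Submodule.span K (v '' {j : Fin n | (j : ℕ) < n}) = ⊤ := by
  -- basic facts about valK
  have hvK1 : valK 1 = 0 := by
    have h := hvalK 1 1 one_ne_zero one_ne_zero
    rw [one_mul] at h
    exact (left_eq_add.mp h)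
  have hvKneg1 : valK (-1 : K) = 0 := by
    have h := hvalK (-1) (-1) (by norm_num) (by norm_num)
    rw [neg_one_mul, neg_neg, hvK1] at h
    by_contra hne
    rcases lt_or_gt_of_ne hne with h1 | h1
    · have h2 := add_lt_add h1 h1
      rw [← h, add_zero] at h2
      exact lt_irrefl _ h2
    · have h2 := add_lt_add h1 h1
      rw [← h, add_zero] at h2
      exact lt_irrefl _ h2
  have hvneg : ∀ w : V, w ≠ 0 → val (-w) = val w := by
    intro w hw
    have h1 : (-1 : K) • w = -w := by simp
    rw [← h1, hscalar (-1) w (by norm_num) hw, hvKneg1, zero_vadd]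
  -- two-term ultrametric equality for distinct valuations
  have haux : ∀ a b : V, a ≠ 0 → b ≠ 0 → val a < val b →
      a + b ≠ 0 ∧ val (a + b) = val a := by
    intro a b ha hb hab
    have hne : a + b ≠ 0 := by
      intro h
      have h2 : a = -b := eq_neg_of_add_eq_zero_left h
      rw [h2, hvneg b hb] at hab
      exact lt_irrefl _ hab
    refine ⟨hne, ?_⟩
    have h1 : val a ≤ val (a + b) := by
      have := hult a b ha hb hne
      rwa [min_eq_left hab.le] at this
    by_contra hgt'
    have hgt : val a < val (a + b) := lt_of_le_of_ne h1 (Ne.symm hgt')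
    have h2 := hult (a + b) (-b) hne (neg_ne_zero.mpr hb) (by simpa using ha)
    rw [add_neg_cancel_right, hvneg b hb] at h2
    exact absurd h2 (not_le.mpr (lt_min hgt hab))
  have htwo : ∀ a b : V, a ≠ 0 → b ≠ 0 → val a ≠ val b →
      a + b ≠ 0 ∧ val (a + b) = min (val a) (val b) := by
    intro a b ha hb hab
    rcases hab.lt_or_gt with h | h
    · obtain ⟨h1, h2⟩ := haux a b ha hb h
      exact ⟨h1, by rw [h2, min_eq_left h.le]⟩
    · obtain ⟨h1, h2⟩ := haux b a hb ha h
      rw [add_comm] at h1 h2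
      exact ⟨h1, by rw [h2, min_eq_right h.le]⟩
  -- valuation of a finite sum of terms with pairwise distinct valuations
  have hsum : ∀ (s : Finset (Fin n)) (w : Fin n → V), (∀ k ∈ s, w k ≠ 0) →
      (∀ k ∈ s, ∀ k' ∈ s, k ≠ k' → val (w k) ≠ val (w k')) → s.Nonempty →
      (∑ k ∈ s, w k) ≠ 0 ∧ ∃ k ∈ s, val (∑ k ∈ s, w k) = val (w k) ∧
        ∀ k' ∈ s, val (w k) ≤ val (w k') := by
    intro s
    induction s using Finset.cons_induction with
    | empty => intro w _ _ hne; exact absurd hne (by simp)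
    | cons a t ha ih =>
      intro w hw hdist _
      rcases t.eq_empty_or_nonempty with rfl | htne
      · refine ⟨by simpa using hw a (by simp), a, by simp, by simp, ?_⟩
        intro k' hk'
        simp only [Finset.cons_empty, Finset.mem_singleton] at hk'
        subst hk'; exact le_rfl
      · obtain ⟨hts, k, hk, hvk, hmin⟩ := ih w
          (fun k hk => hw k (Finset.mem_cons_of_mem hk))
          (fun k hk k' hk' => hdist k (Finset.mem_cons_of_mem hk) k'
            (Finset.mem_cons_of_mem hk')) htne
        have hane : val (w a) ≠ val (∑ x ∈ t, w x) := by
          rw [hvk]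
          exact hdist a (Finset.mem_cons_self a t) k (Finset.mem_cons_of_mem hk)
            (fun h => ha (h ▸ hk))
        have hwa : w a ≠ 0 := hw a (Finset.mem_cons_self a t)
        obtain ⟨hne0, hval⟩ := htwo (w a) (∑ x ∈ t, w x) hwa hts hane
        rw [Finset.sum_cons]
        refine ⟨hne0, ?_⟩
        rcases le_total (val (w a)) (val (w k)) with hle | hle
        · refine ⟨a, Finset.mem_cons_self a t, by rw [hval, hvk, min_eq_left hle], ?_⟩
          intro k' hk'
          rcases Finset.mem_cons.mp hk' with rfl | hk'
          · exact le_rfl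
          · exact hle.trans (hmin k' hk')
        · refine ⟨k, Finset.mem_cons_of_mem hk, by rw [hval, hvk, min_eq_right hle], ?_⟩
          intro k' hk'
          rcases Finset.mem_cons.mp hk' with rfl | hk'
          · exact hle
          · exact hmin k' hk'
  -- orbits of distinct basis vectors are disjoint
  have horb : ∀ (j j' : Fin n), j ≠ j' → ∀ γ γ' : Γ,
      γ +ᵥ val (v j) ≠ γ' +ᵥ val (v j') := by
    intro j j' hne γ γ' heq
    rcases hne.lt_or_gt with h | h
    · exact lt_irrefl _ (hsplit j j' h (γ +ᵥ val (v j)) (γ +ᵥ val (v j))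
        ⟨γ, rfl⟩ ⟨γ', heq.symm⟩)
    · exact lt_irrefl _ (hsplit j' j h (γ' +ᵥ val (v j')) (γ' +ᵥ val (v j'))
        ⟨γ', rfl⟩ ⟨γ, heq⟩)
  have hvne : ∀ j : Fin n, v j ≠ 0 := hli.ne_zero
  -- structure of an arbitrary linear combination
  have hrep : ∀ c : Fin n →₀ K, c.support.Nonempty →
      Finsupp.linearCombination K v c ≠ 0 ∧
      ∃ k ∈ c.support, val (Finsupp.linearCombination K v c) = valK (c k) +ᵥ val (v k) ∧
        ∀ k' ∈ c.support, valK (c k) +ᵥ val (v k) ≤ valK (c k') +ᵥ val (v k') := by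
    intro c hc
    have hxs : Finsupp.linearCombination K v c = ∑ k ∈ c.support, c k • v k := by
      rw [Finsupp.linearCombination_apply, Finsupp.sum]
    have hw0 : ∀ k ∈ c.support, c k • v k ≠ (0 : V) := fun k hk =>
      smul_ne_zero (Finsupp.mem_support_iff.mp hk) (hvne k)
    have hwval : ∀ k ∈ c.support, val (c k • v k) = valK (c k) +ᵥ val (v k) := fun k hk =>
      hscalar _ _ (Finsupp.mem_support_iff.mp hk) (hvne k)
    have hdist : ∀ k ∈ c.support, ∀ k' ∈ c.support, k ≠ k' →
        val (c k • v k) ≠ val (c k' • v k') := by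
      intro k hk k' hk' hne
      rw [hwval k hk, hwval k' hk']
      exact horb k k' hne _ _
    obtain ⟨hne0, k, hk, hvalx, hmin⟩ := hsum c.support (fun k => c k • v k) hw0 hdist hc
    rw [← hxs] at hne0 hvalx
    refine ⟨hne0, k, hk, by rw [hvalx, hwval k hk], ?_⟩
    intro k' hk'
    rw [← hwval k hk, ← hwval k' hk']
    exact hmin k' hk'
  -- Part 1 : set description of the spans
  have hmain : ∀ i : ℕ, i ≤ n →
      ({0} ∪ {x : V | x ≠ 0 ∧ ∃ j : Fin n, (j : ℕ) < i ∧
          ∃ γ : Γ, γ +ᵥ val (v j) = val x} : Set V)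
        = ↑(Submodule.span K (v '' {j : Fin n | (j : ℕ) < i})) := by
    intro i _
    ext x
    simp only [Set.mem_union, Set.mem_singleton_iff, Set.mem_setOf_eq, SetLike.mem_coe]
    constructor
    · rintro (rfl | ⟨hx0, j, hji, γ, hγ⟩)
      · exact Submodule.zero_mem _
      · have hxtop : x ∈ Submodule.span K (v '' Set.univ) := by
          rw [Set.image_univ, hspan]; trivial
        rw [Finsupp.mem_span_image_iff_linearCombination] at hxtop
        obtain ⟨c, _, hc⟩ := hxtop
        have hcsupp : c.support.Nonempty := by
          rcases Finset.eq_empty_or_nonempty c.support with h | h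
          · exfalso
            apply hx0
            rw [← hc, Finsupp.linearCombination_apply, Finsupp.sum, h, Finset.sum_empty]
          · exact h
        obtain ⟨_, k, hk, hvalx, hmin⟩ := hrep c hcsupp
        rw [hc] at hvalx
        have hkj : k = j := by
          by_contra hne
          exact horb k j hne (valK (c k)) γ (by rw [← hvalx, hγ])
        rw [Finsupp.mem_span_image_iff_linearCombination]
        refine ⟨c, ?_, hc⟩
        rw [Finsupp.mem_supported]
        intro k' hk'
        simp only [Set.mem_setOf_eq]
        have hk'mem : k' ∈ c.support := by simpa using hk'
        have hk'k : k' ≤ k := by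
          by_contra hgt
          push_neg at hgt
          have hlt := hsplit k k' hgt (valK (c k) +ᵥ val (v k))
            (valK (c k') +ᵥ val (v k')) ⟨valK (c k), rfl⟩ ⟨valK (c k'), rfl⟩
          exact absurd (hmin k' hk'mem) (not_le.mpr hlt)
        calc (k' : ℕ) ≤ (k : ℕ) := hk'k
          _ = (j : ℕ) := by rw [hkj]
          _ < i := hji
    · intro hx
      by_cases hx0 : x = 0
      · exact Or.inl hx0
      · refine Or.inr ⟨hx0, ?_⟩
        rw [Finsupp.mem_span_image_iff_linearCombination] at hx
        obtain ⟨c, hcs, hc⟩ := hx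
        have hcsupp : c.support.Nonempty := by
          rcases Finset.eq_empty_or_nonempty c.support with h | h
          · exfalso
            apply hx0
            rw [← hc, Finsupp.linearCombination_apply, Finsupp.sum, h, Finset.sum_empty]
          · exact h
        obtain ⟨_, k, hk, hvalx, _⟩ := hrep c hcsupp
        rw [hc] at hvalx
        rw [Finsupp.mem_supported] at hcs
        have hki : (k : ℕ) < i := hcs (by simpa using hk)
        exact ⟨k, hki, valK (c k), hvalx.symm⟩
  refine ⟨hmain, ?_, ?_, ?_⟩
  · -- strict monotonicity
    intro i k hik hkn
    have hsub : {j : Fin n | (j : ℕ) < i} ⊆ {j : Fin n | (j : ℕ) < k} :=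
      fun j hj => lt_of_lt_of_le hj hik.le
    refine lt_of_le_of_ne (Submodule.span_mono (Set.image_mono hsub)) ?_
    intro heq
    have hin : i < n := lt_of_lt_of_le hik hkn
    set ii : Fin n := ⟨i, hin⟩ with hii
    have h1 : v ii ∈ Submodule.span K (v '' {j : Fin n | (j : ℕ) < k}) :=
      Submodule.subset_span ⟨ii, by simpa [hii] using hik, rfl⟩
    rw [← heq] at h1
    exact hli.notMem_span_image (by simp [hii]) h1
  · -- V₀ = ⊥
    have h0 : {j : Fin n | (j : ℕ) < 0} = (∅ : Set (Fin n)) := by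
      ext j; simp
    rw [h0, Set.image_empty, Submodule.span_empty]
  · -- Vₙ = ⊤
    have hn : {j : Fin n | (j : ℕ) < n} = Set.univ := by
      ext j; simp [j.isLt]
    rw [hn, Set.image_univ, hspan]
end
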